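/- For 0 < γ < 1, the function ψ(z) = z^{-γ} / (z^{1-γ} - (z-1)^{1-γ}) is monotonically increasing on (1, ∞). -/

import Mathlib

open Real Set

theorem psi_monotone (γ : ℝ) (hγ0 : 0 < γ) (hγ1 : γ < 1)
    (ψ : ℝ → ℝ)
    (hψ : ∀ z : ℝ, 1 < z → ψ z = z ^ (-γ) / (z ^ (1 - γ) - (z - 1) ^ (1 - γ))) :
    MonotoneOn ψ (Set.Ioi 1) := by
  set g : ℝ → ℝ := fun z => z - z ^ γ * (z - 1) ^ (1 - γ) with hgdef
  -- g is positive on Ioi 1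
  have hgpos : ∀ z ∈ Ioi (1:ℝ), 0 < g z := by
    intro z hz
    have hz1 : (1:ℝ) < z := hz
    have hz0 : (0:ℝ) < z := by linarith
    have h1 : (z-1) ^ (1-γ) < z ^ (1-γ) :=
      Real.rpow_lt_rpow (by linarith) (by linarith) (by linarith)
    have h2 : z ^ γ * (z-1)^(1-γ) < z ^ γ * z ^ (1-γ) :=
      mul_lt_mul_of_pos_left h1 (Real.rpow_pos_of_pos hz0 γ)
    have h3 : z ^ γ * z ^ (1-γ) = z := by
      rw [← Real.rpow_add hz0]; simp
    simp only [hgdef]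
    linarith
  -- derivative of g
  have hderiv : ∀ z ∈ Ioi (1:ℝ), HasDerivAt g
      (1 - (γ * z^(γ-1) * (z-1)^(1-γ) + z^γ * ((1-γ) * (z-1)^(1-γ-1)))) z := by
    intro z hz
    have hz1 : (1:ℝ) < z := hz
    have h1 : HasDerivAt (fun z : ℝ => z ^ γ) (γ * z ^ (γ-1)) z := by
      simpa [mul_comm] using
        Real.hasDerivAt_rpow_const (x := z) (p := γ) (Or.inl (by linarith))
    have h2 : HasDerivAt (fun z : ℝ => (z-1) ^ (1-γ)) ((1-γ) * (z-1)^(1-γ-1)) z := by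
      have hs : HasDerivAt (fun z : ℝ => z - 1) 1 z := (hasDerivAt_id z).sub_const 1
      have := (Real.hasDerivAt_rpow_const (x := z - 1) (p := 1-γ)
        (Or.inl (by linarith : z - 1 ≠ 0))).comp z hs
      simpa [mul_comm, Function.comp_def] using this
    exact (hasDerivAt_id z).sub (h1.mul h2)
  -- derivative is nonpositive
  have hnonpos : ∀ z ∈ Ioi (1:ℝ),
      (1 - (γ * z^(γ-1) * (z-1)^(1-γ) + z^γ * ((1-γ) * (z-1)^(1-γ-1)))) ≤ 0 := by
    intro z hz
    have hz1 : (1:ℝ) < z := hz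
    have hz0 : (0:ℝ) < z := by linarith
    have hz1' : (0:ℝ) < z - 1 := by linarith
    set p₁ : ℝ := z^(γ-1) * (z-1)^(1-γ) with hp1
    set p₂ : ℝ := z^γ * (z-1)^(-γ) with hp2
    have hp1pos : 0 < p₁ := mul_pos (Real.rpow_pos_of_pos hz0 _) (Real.rpow_pos_of_pos hz1' _)
    have hp2pos : 0 < p₂ := mul_pos (Real.rpow_pos_of_pos hz0 _) (Real.rpow_pos_of_pos hz1' _)
    have key : p₁ ^ γ * p₂ ^ (1-γ) ≤ γ * p₁ + (1-γ) * p₂ :=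
      Real.geom_mean_le_arith_mean2_weighted hγ0.le (by linarith) hp1pos.le hp2pos.le
        (by ring)
    have hprod : p₁ ^ γ * p₂ ^ (1-γ) = 1 := by
      rw [hp1, hp2,
        Real.mul_rpow (Real.rpow_pos_of_pos hz0 _).le (Real.rpow_pos_of_pos hz1' _).le,
        Real.mul_rpow (Real.rpow_pos_of_pos hz0 _).le (Real.rpow_pos_of_pos hz1' _).le,
        ← Real.rpow_mul hz0.le, ← Real.rpow_mul hz1'.le,
        ← Real.rpow_mul hz0.le, ← Real.rpow_mul hz1'.le,
        mul_mul_mul_comm, ← Real.rpow_add hz0, ← Real.rpow_add hz1',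
        show (γ-1)*γ + γ*(1-γ) = 0 by ring, show (1-γ)*γ + (-γ)*(1-γ) = 0 by ring]
      simp
    have : (1:ℝ) ≤ γ * p₁ + (1-γ) * p₂ := by linarith [key, hprod.le, hprod.ge]
    have hexp : (1:ℝ) - γ - 1 = -γ := by ring
    have : γ * z^(γ-1) * (z-1)^(1-γ) + z^γ * ((1-γ) * (z-1)^(1-γ-1)) = γ * p₁ + (1-γ) * p₂ := by
      rw [hp1, hp2, hexp]; ring
    linarith
  -- g is antitone
  have hdiff : ∀ z ∈ Ioi (1:ℝ), DifferentiableAt ℝ g z := fun z hz =>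
    (hderiv z hz).differentiableAt
  have hant : AntitoneOn g (Ioi 1) := by
    apply antitoneOn_of_deriv_nonpos (convex_Ioi 1)
    · exact fun z hz => (hdiff z hz).continuousAt.continuousWithinAt
    · rw [interior_Ioi]; exact fun z hz => (hdiff z hz).differentiableWithinAt
    · rw [interior_Ioi]
      intro z hz
      rw [(hderiv z hz).deriv]
      exact hnonpos z hz
  -- ψ = 1/g on Ioi 1
  have hpsi : ∀ z ∈ Ioi (1:ℝ), ψ z = 1 / g z := by
    intro z hz
    have hz1 : (1:ℝ) < z := hz
    have hz0 : (0:ℝ) < z := by linarith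
    rw [hψ z hz1]
    have h3 : z ^ γ * z ^ (1-γ) = z := by rw [← Real.rpow_add hz0]; simp
    have hg : g z = z ^ γ * (z ^ (1-γ) - (z-1)^(1-γ)) := by
      simp only [hgdef]; rw [mul_sub, h3]
    rw [hg, Real.rpow_neg hz0.le, div_eq_mul_inv, one_div, mul_inv]
  -- conclude
  intro a ha b hb hab
  rw [hpsi a ha, hpsi b hb]
  exact one_div_le_one_div_of_le (hgpos b hb) (hant ha hb hab)
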